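/- (Gradient of the smoothed coherence objective) Let ρ > 0, define g_ρ(G) = sup { ⟨G, V⟩ − (ρ/2)‖V‖_F² : ‖V‖₁ ≤ 1 } on n×n matrices and f_ρ(M) = g_ρ(MᵀM − I) for M ∈ ℝ^{m×n}. Then f_ρ is differentiable at every M with gradient ∇f_ρ(M) = M(V* + V*ᵀ), where V* is the unique maximizer of ⟨MᵀM − I, V⟩ − (ρ/2)‖V‖_F² over {V : ‖V‖₁ ≤ 1}. -/

import Mathlib

open Matrix

attribute [local instance] Matrix.normedAddCommGroup Matrix.normedSpace

/-- The entrywise ℓ₁-norm `‖V‖₁ = Σ_{i,j} |v_{ij}|`. -/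
noncomputable def l1Norm {n : ℕ} (V : Matrix (Fin n) (Fin n) ℝ) : ℝ :=
  ∑ i, ∑ j, |V i j|

/-- The Frobenius inner product `⟨A, B⟩ = Σ_{i,j} a_{ij} b_{ij}` of m×n matrices. -/
noncomputable def finner {m n : ℕ} (A B : Matrix (Fin m) (Fin n) ℝ) : ℝ :=
  ∑ i, ∑ j, A i j * B i j

/-- The squared Frobenius norm `‖V‖_F²` of an m×n matrix. -/
noncomputable def frobSq {m n : ℕ} (V : Matrix (Fin m) (Fin n) ℝ) : ℝ :=
  ∑ i, ∑ j, V i j ^ 2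

/-- The smoothed infinity norm
`g_ρ(G) = sup { ⟨G, V⟩ − (ρ/2)‖V‖_F² : ‖V‖₁ ≤ 1 }`. -/
noncomputable def gRho {n : ℕ} (ρ : ℝ) (G : Matrix (Fin n) (Fin n) ℝ) : ℝ :=
  sSup {x : ℝ | ∃ V : Matrix (Fin n) (Fin n) ℝ, l1Norm V ≤ 1 ∧
    x = finner G V - ρ / 2 * frobSq V}

namespace S19
variable {m n : ℕ}

lemma finner_add_right (A B C : Matrix (Fin m) (Fin n) ℝ) :
    finner A (B + C) = finner A B + finner A C := by
  simp [finner, Matrix.add_apply, mul_add, Finset.sum_add_distrib]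

lemma finner_sub_right (A B C : Matrix (Fin m) (Fin n) ℝ) :
    finner A (B - C) = finner A B - finner A C := by
  simp [finner, Matrix.sub_apply, mul_sub, Finset.sum_sub_distrib]

lemma finner_smul_right (t : ℝ) (A B : Matrix (Fin m) (Fin n) ℝ) :
    finner A (t • B) = t * finner A B := by
  simp [finner, Matrix.smul_apply, smul_eq_mul, Finset.mul_sum]; ring_nf
  exact Finset.sum_congr rfl fun i _ => Finset.sum_congr rfl fun j _ => by ring

lemma finner_comm (A B : Matrix (Fin m) (Fin n) ℝ) : finner A B = finner B A := by
  simp [finner, mul_comm]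

lemma finner_sub_left (A B C : Matrix (Fin m) (Fin n) ℝ) :
    finner (A - B) C = finner A C - finner B C := by
  rw [finner_comm, finner_sub_right, finner_comm C A, finner_comm C B]

lemma finner_add_left (A B C : Matrix (Fin m) (Fin n) ℝ) :
    finner (A + B) C = finner A C + finner B C := by
  rw [finner_comm, finner_add_right, finner_comm C A, finner_comm C B]

lemma frobSq_eq (A : Matrix (Fin m) (Fin n) ℝ) : frobSq A = finner A A := by
  simp [frobSq, finner, sq]

lemma frobSq_nonneg (A : Matrix (Fin m) (Fin n) ℝ) : 0 ≤ frobSq A := by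
  apply Finset.sum_nonneg; intro i _; apply Finset.sum_nonneg; intro j _; positivity

lemma eq_of_frobSq_nonpos {A : Matrix (Fin m) (Fin n) ℝ} (h : frobSq A ≤ 0) : A = 0 := by
  have h0 : frobSq A = 0 := le_antisymm h (frobSq_nonneg A)
  funext i j
  simp only [frobSq] at h0
  rw [Finset.sum_eq_zero_iff_of_nonneg
    (fun i _ => Finset.sum_nonneg fun j _ => by positivity)] at h0
  have h2 := h0 i (Finset.mem_univ i)
  rw [Finset.sum_eq_zero_iff_of_nonneg (by intro j _; positivity)] at h2
  have := h2 j (Finset.mem_univ j)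
  have : A i j = 0 := by nlinarith [this]
  simpa using this

lemma frobSq_add (A B : Matrix (Fin m) (Fin n) ℝ) :
    frobSq (A + B) = frobSq A + 2 * finner A B + frobSq B := by
  simp only [frobSq, finner, Matrix.add_apply]
  have h : ∀ i j, (A i j + B i j)^2 = A i j^2 + 2*(A i j * B i j) + B i j ^2 := by
    intros; ring
  simp_rw [h, Finset.sum_add_distrib, Finset.mul_sum]

lemma l1Norm_nonneg (A : Matrix (Fin n) (Fin n) ℝ) : 0 ≤ l1Norm A := by
  apply Finset.sum_nonneg; intro i _; apply Finset.sum_nonneg; intro j _; positivity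

lemma l1Norm_smul (t : ℝ) (A : Matrix (Fin n) (Fin n) ℝ) :
    l1Norm (t • A) = |t| * l1Norm A := by
  simp [l1Norm, Matrix.smul_apply, smul_eq_mul, abs_mul, Finset.mul_sum]

lemma l1Norm_add_le (A B : Matrix (Fin n) (Fin n) ℝ) :
    l1Norm (A + B) ≤ l1Norm A + l1Norm B := by
  simp only [l1Norm, Matrix.add_apply, ← Finset.sum_add_distrib]
  apply Finset.sum_le_sum; intro i _; apply Finset.sum_le_sum; intro j _
  exact abs_add_le _ _

lemma entry_abs_le_l1Norm (A : Matrix (Fin n) (Fin n) ℝ) (i j : Fin n) :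
    |A i j| ≤ l1Norm A := by
  calc |A i j| ≤ ∑ j', |A i j'| :=
        Finset.single_le_sum (f := fun j' => |A i j'|)
          (fun j' _ => abs_nonneg _) (Finset.mem_univ j)
    _ ≤ l1Norm A :=
        Finset.single_le_sum (f := fun i' => ∑ j', |A i' j'|)
          (fun i' _ => Finset.sum_nonneg fun j' _ => abs_nonneg _) (Finset.mem_univ i)

lemma abs_finner_le {A B : Matrix (Fin n) (Fin n) ℝ} {c : ℝ}
    (hB : ∀ i j, |B i j| ≤ c) : |finner A B| ≤ c * l1Norm A := by
  calc |finner A B| ≤ ∑ i, ∑ j, |A i j * B i j| := by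
        refine (Finset.abs_sum_le_sum_abs _ _).trans ?_
        exact Finset.sum_le_sum fun i _ => Finset.abs_sum_le_sum_abs _ _
    _ ≤ ∑ i, ∑ j, |A i j| * c := by
        refine Finset.sum_le_sum fun i _ => Finset.sum_le_sum fun j _ => ?_
        rw [abs_mul]
        exact mul_le_mul_of_nonneg_left (hB i j) (abs_nonneg _)
    _ = c * l1Norm A := by simp [l1Norm, Finset.mul_sum, Finset.sum_mul, mul_comm]

lemma frobSq_le_of_entries {A : Matrix (Fin n) (Fin n) ℝ} {c : ℝ}
    (hc : 0 ≤ c) (hA : ∀ i j, |A i j| ≤ c) : frobSq A ≤ (n : ℝ) * n * c ^ 2 := by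
  have : frobSq A ≤ ∑ i : Fin n, ∑ j : Fin n, c ^ 2 := by
    refine Finset.sum_le_sum fun i _ => Finset.sum_le_sum fun j _ => ?_
    have := hA i j
    nlinarith [abs_nonneg (A i j), neg_abs_le (A i j), le_abs_self (A i j)]
  simpa [Finset.sum_const, mul_assoc] using this

lemma finner_amgm {ρ : ℝ} (hρ : 0 < ρ) (E D : Matrix (Fin n) (Fin n) ℝ) :
    finner E D ≤ ρ/2 * frobSq D + 1/(2*ρ) * frobSq E := by
  simp only [finner, frobSq, Finset.mul_sum, ← Finset.sum_add_distrib]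
  refine Finset.sum_le_sum fun i _ => Finset.sum_le_sum fun j _ => ?_
  have h2ρ : (0:ℝ) < 2*ρ := by linarith
  have expand : (2*ρ) * (ρ/2 * D i j^2 + 1/(2*ρ)*E i j^2) = ρ^2*D i j^2 + E i j^2 := by
    field_simp
  have key : (2*ρ) * (E i j * D i j) ≤ (2*ρ) * (ρ/2 * D i j^2 + 1/(2*ρ)*E i j^2) := by
    rw [expand]
    nlinarith [sq_nonneg (E i j - ρ * D i j)]
  exact (mul_le_mul_iff_right₀ h2ρ).mp key


lemma finner_eq_trace (A B : Matrix (Fin m) (Fin n) ℝ) :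
    finner A B = Matrix.trace (Aᵀ * B) := by
  simp only [finner, Matrix.trace, Matrix.diag, Matrix.mul_apply, Matrix.transpose_apply]
  rw [Finset.sum_comm]

lemma key_identity (V : Matrix (Fin n) (Fin n) ℝ) (M H : Matrix (Fin m) (Fin n) ℝ) :
    finner V (Hᵀ * M + Mᵀ * H) = finner (M * (V + Vᵀ)) H := by
  rw [finner_eq_trace, finner_eq_trace]
  have h1 : (M * (V + Vᵀ))ᵀ * H = (Vᵀ + V) * (Mᵀ * H) := by
    rw [Matrix.transpose_mul, Matrix.transpose_add, Matrix.transpose_transpose,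
      Matrix.mul_assoc]
  rw [h1, Matrix.mul_add, Matrix.add_mul, Matrix.trace_add, Matrix.trace_add]
  have h2 : Vᵀ * (Hᵀ * M) = (Mᵀ * (H * V))ᵀ := by
    rw [Matrix.transpose_mul, Matrix.transpose_mul, Matrix.transpose_transpose,
      Matrix.mul_assoc]
  have h3 : (Vᵀ * (Hᵀ * M)).trace = (V * (Mᵀ * H)).trace := by
    rw [h2, Matrix.trace_transpose, ← Matrix.mul_assoc, Matrix.trace_mul_cycle,
      Matrix.mul_assoc]
  rw [h3, add_comm]

lemma frobSq_smul (t : ℝ) (A : Matrix (Fin m) (Fin n) ℝ) :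
    frobSq (t • A) = t^2 * frobSq A := by
  simp [frobSq, Matrix.smul_apply, smul_eq_mul, mul_pow, Finset.mul_sum]

lemma frobSq_sub (A B : Matrix (Fin m) (Fin n) ℝ) :
    frobSq (A - B) = frobSq A - 2 * finner A B + frobSq B := by
  have := frobSq_add A (-B)
  have hn : finner A (-B) = - finner A B := by
    have := finner_sub_right A 0 B
    simpa [finner] using this
  have hfs : frobSq (-B) = frobSq B := by simp [frobSq]
  rw [sub_eq_add_neg]
  rw [this, hn, hfs]; ring

lemma exists_max (ρ : ℝ) (G : Matrix (Fin n) (Fin n) ℝ) :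
    ∃ V : Matrix (Fin n) (Fin n) ℝ, l1Norm V ≤ 1 ∧
      ∀ W : Matrix (Fin n) (Fin n) ℝ, l1Norm W ≤ 1 →
        finner G W - ρ / 2 * frobSq W ≤ finner G V - ρ / 2 * frobSq V := by
  have hentry : ∀ (i j : Fin n), Continuous fun V : Matrix (Fin n) (Fin n) ℝ => V i j :=
    fun i j => (continuous_apply j).comp (continuous_apply i)
  have hl1 : Continuous fun V : Matrix (Fin n) (Fin n) ℝ => l1Norm V := by
    unfold l1Norm
    exact continuous_finset_sum _ fun i _ => continuous_finset_sum _ fun j _ =>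
      (hentry i j).abs
  have hφ : Continuous fun V : Matrix (Fin n) (Fin n) ℝ =>
      finner G V - ρ / 2 * frobSq V := by
    unfold finner frobSq
    exact ((continuous_finset_sum _ fun i _ => continuous_finset_sum _ fun j _ =>
      (continuous_const.mul (hentry i j)))).sub
      (continuous_const.mul (continuous_finset_sum _ fun i _ =>
        continuous_finset_sum _ fun j _ => (hentry i j).pow 2))
  have hclosed : IsClosed {V : Matrix (Fin n) (Fin n) ℝ | l1Norm V ≤ 1} :=
    isClosed_le hl1 continuous_const
  have hsub : {V : Matrix (Fin n) (Fin n) ℝ | l1Norm V ≤ 1} ⊆ Metric.closedBall 0 1 := by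
    intro V hV
    rw [Metric.mem_closedBall, dist_zero_right]
    rw [Matrix.norm_le_iff (by norm_num : (0:ℝ) ≤ 1)]
    intro i j
    calc ‖V i j‖ = |V i j| := Real.norm_eq_abs _
      _ ≤ l1Norm V := entry_abs_le_l1Norm V i j
      _ ≤ 1 := hV
  have hcpt : IsCompact {V : Matrix (Fin n) (Fin n) ℝ | l1Norm V ≤ 1} :=
    (isCompact_closedBall 0 1).of_isClosed_subset hclosed hsub
  have hne : {V : Matrix (Fin n) (Fin n) ℝ | l1Norm V ≤ 1}.Nonempty :=
    ⟨0, by simp [l1Norm]⟩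
  obtain ⟨V, hVmem, hVmax⟩ := hcpt.exists_isMaxOn hne hφ.continuousOn
  exact ⟨V, hVmem, fun W hW => hVmax hW⟩

lemma var_ineq {ρ : ℝ} (hρ : 0 < ρ) {G V : Matrix (Fin n) (Fin n) ℝ}
    (hV : l1Norm V ≤ 1)
    (hmax : ∀ W : Matrix (Fin n) (Fin n) ℝ, l1Norm W ≤ 1 →
      finner G W - ρ / 2 * frobSq W ≤ finner G V - ρ / 2 * frobSq V)
    {W : Matrix (Fin n) (Fin n) ℝ} (hW : l1Norm W ≤ 1) :
    finner G (W - V) ≤ ρ * finner V (W - V) := by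
  by_contra hcon
  push_neg at hcon
  obtain ⟨c, hc⟩ : ∃ c : ℝ, c = finner G (W - V) - ρ * finner V (W - V) := ⟨_, rfl⟩
  have hcpos : 0 < c := by rw [hc]; linarith
  obtain ⟨K, hK⟩ : ∃ K : ℝ, K = ρ / 2 * frobSq (W - V) := ⟨_, rfl⟩
  have hK0 : 0 ≤ K := by rw [hK]; exact mul_nonneg (by linarith) (frobSq_nonneg _)
  obtain ⟨t, ht⟩ : ∃ t : ℝ, t = min 1 (c / (K + 1)) := ⟨_, rfl⟩
  have ht0 : 0 < t := by
    rw [ht]; exact lt_min one_pos (div_pos hcpos (by linarith))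
  have ht1 : t ≤ 1 := by rw [ht]; exact min_le_left _ _
  have ht2 : t ≤ c / (K + 1) := by rw [ht]; exact min_le_right _ _
  have hmem : l1Norm (V + t • (W - V)) ≤ 1 := by
    have heq : V + t • (W - V) = (1 - t) • V + t • W := by module
    rw [heq]
    calc l1Norm ((1 - t) • V + t • W) ≤ l1Norm ((1 - t) • V) + l1Norm (t • W) :=
          l1Norm_add_le _ _
      _ = |1 - t| * l1Norm V + |t| * l1Norm W := by rw [l1Norm_smul, l1Norm_smul]
      _ ≤ (1 - t) * 1 + t * 1 := by
          rw [abs_of_nonneg (by linarith), abs_of_nonneg ht0.le]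
          exact add_le_add (mul_le_mul_of_nonneg_left hV (by linarith))
            (mul_le_mul_of_nonneg_left hW ht0.le)
      _ = 1 := by ring
  have hexp : finner G (V + t • (W - V)) - ρ / 2 * frobSq (V + t • (W - V))
      = (finner G V - ρ / 2 * frobSq V) + t * c - t ^ 2 * K := by
    rw [hc, hK, finner_add_right, finner_smul_right, frobSq_add, frobSq_smul,
      finner_smul_right]
    ring
  have hle := hmax _ hmem
  rw [hexp] at hle
  have h1 : t * c ≤ t ^ 2 * K := by linarith
  have e : t ^ 2 * K = t * (t * K) := by ring
  rw [e] at h1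
  have h2 : c ≤ t * K := (mul_le_mul_iff_right₀ ht0).mp h1
  have h4 : t * K ≤ c / (K + 1) * K := mul_le_mul_of_nonneg_right ht2 hK0
  have h5 : c / (K + 1) * K < c := by
    rw [div_mul_eq_mul_div, div_lt_iff₀ (by linarith : (0:ℝ) < K + 1)]
    nlinarith
  linarith

lemma max_unique {ρ : ℝ} (hρ : 0 < ρ) {G V W : Matrix (Fin n) (Fin n) ℝ}
    (hV : l1Norm V ≤ 1)
    (hmaxV : ∀ U : Matrix (Fin n) (Fin n) ℝ, l1Norm U ≤ 1 →
      finner G U - ρ / 2 * frobSq U ≤ finner G V - ρ / 2 * frobSq V)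
    (hW : l1Norm W ≤ 1)
    (hmaxW : ∀ U : Matrix (Fin n) (Fin n) ℝ, l1Norm U ≤ 1 →
      finner G U - ρ / 2 * frobSq U ≤ finner G W - ρ / 2 * frobSq W) :
    W = V := by
  have h1 := var_ineq hρ hV hmaxV hW
  have h2 := var_ineq hρ hW hmaxW hV
  rw [finner_sub_right, finner_sub_right] at h1 h2
  have hcomm : finner V W = finner W V := finner_comm V W
  have hfs : frobSq (W - V) = frobSq W - 2 * finner W V + frobSq V := frobSq_sub W V
  have hVV : frobSq V = finner V V := frobSq_eq V
  have hWW : frobSq W = finner W W := frobSq_eq W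
  have hle : frobSq (W - V) ≤ 0 := by nlinarith
  have := eq_of_frobSq_nonpos hle
  exact sub_eq_zero.mp this

lemma grad_bound {ρ : ℝ} (hρ : 0 < ρ) {G G' V V' : Matrix (Fin n) (Fin n) ℝ}
    (hV : l1Norm V ≤ 1)
    (hmaxV : ∀ W : Matrix (Fin n) (Fin n) ℝ, l1Norm W ≤ 1 →
      finner G W - ρ / 2 * frobSq W ≤ finner G V - ρ / 2 * frobSq V)
    (hV' : l1Norm V' ≤ 1)
    (hmaxV' : ∀ W : Matrix (Fin n) (Fin n) ℝ, l1Norm W ≤ 1 →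
      finner G' W - ρ / 2 * frobSq W ≤ finner G' V' - ρ / 2 * frobSq V') :
    0 ≤ (finner G' V' - ρ / 2 * frobSq V') - (finner G V - ρ / 2 * frobSq V)
        - finner V (G' - G) ∧
    (finner G' V' - ρ / 2 * frobSq V') - (finner G V - ρ / 2 * frobSq V)
        - finner V (G' - G) ≤ 1 / ρ * frobSq (G' - G) := by
  have hVG : finner V (G' - G) = finner G' V - finner G V := by
    rw [finner_sub_right, finner_comm V G', finner_comm V G]
  have hlow := hmaxV' V hV
  have hup := hmaxV V' hV'
  have h1 := var_ineq hρ hV hmaxV hV'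
  have h2 := var_ineq hρ hV' hmaxV' hV
  have e1 : finner V (V' - V) = finner V' V - finner V V := by
    rw [finner_sub_right, finner_comm V V']
  have e2 : finner V' (V - V') = finner V' V - finner V' V' := finner_sub_right _ _ _
  rw [finner_sub_right, e1] at h1
  rw [finner_sub_right, e2] at h2
  have hfs : frobSq (V' - V) = frobSq V' - 2 * finner V' V + frobSq V := frobSq_sub V' V
  have hVVe : frobSq V = finner V V := frobSq_eq V
  have hV'V'e : frobSq V' = finner V' V' := frobSq_eq V'
  have hsum : ρ * frobSq (V' - V)
      = -(ρ * (finner V' V - finner V V) + ρ * (finner V' V - finner V' V')) := by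
    rw [hfs, hVVe, hV'V'e]; ring
  have hkey : ρ * frobSq (V' - V) ≤
      (finner G' V' - finner G' V) - (finner G V' - finner G V) := by
    rw [hsum]; linarith
  have hamgm := finner_amgm hρ (G' - G) (V' - V)
  have hamgm' : (finner G' V' - finner G' V) - (finner G V' - finner G V) ≤
      ρ / 2 * frobSq (V' - V) + 1 / (2 * ρ) * frobSq (G' - G) := by
    have e : finner (G' - G) (V' - V) =
        (finner G' V' - finner G' V) - (finner G V' - finner G V) := by
      rw [finner_sub_left, finner_sub_right, finner_sub_right]
    rw [e] at hamgm; exact hamgm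
  have hF0 : 0 ≤ frobSq (V' - V) := frobSq_nonneg _
  have hE0 : 0 ≤ frobSq (G' - G) := frobSq_nonneg _
  have hhalf' : 1 / (2 * ρ) * frobSq (G' - G) + 1 / (2 * ρ) * frobSq (G' - G)
      = 1 / ρ * frobSq (G' - G) := by
    have h : (1:ℝ) / (2 * ρ) + 1 / (2 * ρ) = 1 / ρ := by
      rw [← add_div, mul_comm 2 ρ, ← div_div]
      ring
    rw [← add_mul, h]
  have hFle : ρ / 2 * frobSq (V' - V) ≤ 1 / (2 * ρ) * frobSq (G' - G) := by linarith
  constructor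
  · rw [hVG]; linarith
  · rw [hVG]; linarith


lemma gRho_eq {ρ : ℝ} {G V : Matrix (Fin n) (Fin n) ℝ} (hV : l1Norm V ≤ 1)
    (hmax : ∀ W : Matrix (Fin n) (Fin n) ℝ, l1Norm W ≤ 1 →
      finner G W - ρ / 2 * frobSq W ≤ finner G V - ρ / 2 * frobSq V) :
    gRho ρ G = finner G V - ρ / 2 * frobSq V := by
  apply IsGreatest.csSup_eq
  constructor
  · exact ⟨V, hV, rfl⟩
  · rintro x ⟨W, hW, rfl⟩
    exact hmax W hW

lemma entry_abs_le_norm (A : Matrix (Fin m) (Fin n) ℝ) (i : Fin m) (j : Fin n) :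
    |A i j| ≤ ‖A‖ := by
  have := Matrix.norm_entry_le_entrywise_sup_norm (A := A) (i := i) (j := j)
  simpa [Real.norm_eq_abs] using this

lemma entry_mul_bound (A B : Matrix (Fin m) (Fin n) ℝ) {a b : ℝ}
    (hA : ∀ i j, |A i j| ≤ a) (hB : ∀ i j, |B i j| ≤ b) (ha : 0 ≤ a)
    (i j : Fin n) : |(Aᵀ * B) i j| ≤ (m : ℝ) * (a * b) := by
  rw [Matrix.mul_apply]
  calc |∑ k, Aᵀ i k * B k j| ≤ ∑ k, |Aᵀ i k * B k j| := Finset.abs_sum_le_sum_abs _ _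
    _ ≤ ∑ _k : Fin m, a * b := by
        refine Finset.sum_le_sum fun k _ => ?_
        rw [Matrix.transpose_apply, abs_mul]
        exact mul_le_mul (hA k i) (hB k j) (abs_nonneg _) ha
    _ = (m : ℝ) * (a * b) := by
        simp [Finset.sum_const, Finset.card_univ, nsmul_eq_mul]

lemma main_est {ρ : ℝ} (hρ : 0 < ρ) (M : Matrix (Fin m) (Fin n) ℝ)
    {V : Matrix (Fin n) (Fin n) ℝ} (hV : l1Norm V ≤ 1)
    (hmaxV : ∀ W : Matrix (Fin n) (Fin n) ℝ, l1Norm W ≤ 1 →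
      finner (Mᵀ * M - 1) W - ρ / 2 * frobSq W ≤
        finner (Mᵀ * M - 1) V - ρ / 2 * frobSq V)
    (H : Matrix (Fin m) (Fin n) ℝ) (hH1 : ‖H‖ ≤ 1) :
    |gRho ρ ((M + H)ᵀ * (M + H) - 1) - gRho ρ (Mᵀ * M - 1) - finner (M * (V + Vᵀ)) H|
      ≤ (1 / ρ * ((n : ℝ) * (m : ℝ) * (2 * ‖M‖ + 1)) ^ 2 + (m : ℝ)) * ‖H‖ ^ 2 := by
  obtain ⟨V', hV', hmaxV'⟩ := exists_max ρ ((M + H)ᵀ * (M + H) - 1)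
  rw [gRho_eq hV' hmaxV', gRho_eq hV hmaxV]
  have hEeq : (M + H)ᵀ * (M + H) - 1 - (Mᵀ * M - 1) = (Hᵀ * M + Mᵀ * H) + Hᵀ * H := by
    rw [Matrix.transpose_add, Matrix.add_mul, Matrix.mul_add, Matrix.mul_add]
    abel
  have hgb := grad_bound hρ hV hmaxV hV' hmaxV'
  have hsplit : finner V ((M + H)ᵀ * (M + H) - 1 - (Mᵀ * M - 1)) =
      finner (M * (V + Vᵀ)) H + finner V (Hᵀ * H) := by
    rw [hEeq, finner_add_right, key_identity]
  -- entry bounds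
  have hHent : ∀ (i : Fin m) (j : Fin n), |H i j| ≤ ‖H‖ := fun i j => entry_abs_le_norm H i j
  have hMent : ∀ (i : Fin m) (j : Fin n), |M i j| ≤ ‖M‖ := fun i j => entry_abs_le_norm M i j
  have hHH : ∀ i j, |(Hᵀ * H) i j| ≤ (m : ℝ) * (‖H‖ * ‖H‖) :=
    entry_mul_bound H H hHent hHent (norm_nonneg H)
  have hfVH : |finner V (Hᵀ * H)| ≤ (m : ℝ) * ‖H‖ ^ 2 := by
    have h := abs_finner_le (A := V) hHH
    have h2 : (m : ℝ) * (‖H‖ * ‖H‖) * l1Norm V ≤ (m : ℝ) * (‖H‖ * ‖H‖) * 1 :=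
      mul_le_mul_of_nonneg_left hV
        (mul_nonneg (Nat.cast_nonneg m) (mul_nonneg (norm_nonneg H) (norm_nonneg H)))
    calc |finner V (Hᵀ * H)| ≤ (m : ℝ) * (‖H‖ * ‖H‖) * l1Norm V := h
      _ ≤ (m : ℝ) * (‖H‖ * ‖H‖) * 1 := h2
      _ = (m : ℝ) * ‖H‖ ^ 2 := by ring
  have hEent : ∀ i j, |((Hᵀ * M + Mᵀ * H) + Hᵀ * H) i j| ≤ (m : ℝ) * (2 * ‖M‖ + 1) * ‖H‖ := by
    intro i j
    have b1 := entry_mul_bound H M hHent hMent (norm_nonneg H) i j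
    have b2 := entry_mul_bound M H hMent hHent (norm_nonneg M) i j
    have b3 := hHH i j
    have hm0 : (0 : ℝ) ≤ (m : ℝ) := Nat.cast_nonneg m
    have hh0 : (0 : ℝ) ≤ ‖H‖ := norm_nonneg H
    calc |((Hᵀ * M + Mᵀ * H) + Hᵀ * H) i j|
        = |(Hᵀ * M) i j + (Mᵀ * H) i j + (Hᵀ * H) i j| := by
          simp [Matrix.add_apply]
      _ ≤ |(Hᵀ * M) i j + (Mᵀ * H) i j| + |(Hᵀ * H) i j| := abs_add_le _ _
      _ ≤ |(Hᵀ * M) i j| + |(Mᵀ * H) i j| + |(Hᵀ * H) i j| := by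
          have := abs_add_le ((Hᵀ * M) i j) ((Mᵀ * H) i j)
          linarith
      _ ≤ (m : ℝ) * (2 * ‖M‖ + 1) * ‖H‖ := by
          nlinarith [mul_le_mul_of_nonneg_left hH1 (mul_nonneg hm0 hh0)]
  have hEfs : frobSq ((Hᵀ * M + Mᵀ * H) + Hᵀ * H) ≤
      (n : ℝ) * n * ((m : ℝ) * (2 * ‖M‖ + 1) * ‖H‖) ^ 2 :=
    frobSq_le_of_entries
      (by positivity) hEent
  have h1ρ : 0 < 1 / ρ := one_div_pos.mpr hρ
  have hgap1 := hgb.1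
  have hgap2 := hgb.2
  rw [hsplit] at hgap1 hgap2
  have hEbound : 1 / ρ * frobSq ((M + H)ᵀ * (M + H) - 1 - (Mᵀ * M - 1)) ≤
      1 / ρ * ((n : ℝ) * (m : ℝ) * (2 * ‖M‖ + 1)) ^ 2 * ‖H‖ ^ 2 := by
    rw [hEeq]
    have := mul_le_mul_of_nonneg_left hEfs h1ρ.le
    calc 1 / ρ * frobSq ((Hᵀ * M + Mᵀ * H) + Hᵀ * H)
        ≤ 1 / ρ * ((n : ℝ) * n * ((m : ℝ) * (2 * ‖M‖ + 1) * ‖H‖) ^ 2) := this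
      _ = 1 / ρ * ((n : ℝ) * (m : ℝ) * (2 * ‖M‖ + 1)) ^ 2 * ‖H‖ ^ 2 := by ring
  rw [hEeq] at hgap2 hEbound
  have hpos : 0 ≤ 1 / ρ * ((n : ℝ) * (m : ℝ) * (2 * ‖M‖ + 1)) ^ 2 * ‖H‖ ^ 2 :=
    mul_nonneg (mul_nonneg h1ρ.le (sq_nonneg _)) (sq_nonneg _)
  rw [abs_le]
  constructor
  · have := neg_abs_le (finner V (Hᵀ * H))
    nlinarith
  · have := le_abs_self (finner V (Hᵀ * H))
    nlinarith

end S19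

/-- gradient of the smoothed coherence objective: with
`f_ρ(M) = g_ρ(MᵀM − I)`, the function `f_ρ` is differentiable at every `M` with gradient
`∇f_ρ(M) = M(V* + V*ᵀ)` (with respect to the Frobenius inner product, i.e. the derivative
in direction `H` is `⟨M(V* + V*ᵀ), H⟩`), where `V*` is the unique maximizer of
`⟨MᵀM − I, V⟩ − (ρ/2)‖V‖_F²` over the entrywise ℓ₁-ball. -/
theorem stmt_19 {m n : ℕ} (ρ : ℝ) (hρ : 0 < ρ) (M : Matrix (Fin m) (Fin n) ℝ) :
    ∃ V : Matrix (Fin n) (Fin n) ℝ,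
      (l1Norm V ≤ 1 ∧
        ∀ W : Matrix (Fin n) (Fin n) ℝ, l1Norm W ≤ 1 →
          finner (Mᵀ * M - 1) W - ρ / 2 * frobSq W ≤
            finner (Mᵀ * M - 1) V - ρ / 2 * frobSq V) ∧
      (∀ W : Matrix (Fin n) (Fin n) ℝ, l1Norm W ≤ 1 →
        (∀ U : Matrix (Fin n) (Fin n) ℝ, l1Norm U ≤ 1 →
          finner (Mᵀ * M - 1) U - ρ / 2 * frobSq U ≤
            finner (Mᵀ * M - 1) W - ρ / 2 * frobSq W) → W = V) ∧
      DifferentiableAt ℝ (fun X : Matrix (Fin m) (Fin n) ℝ => gRho ρ (Xᵀ * X - 1)) M ∧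
      ∀ H : Matrix (Fin m) (Fin n) ℝ,
        fderiv ℝ (fun X : Matrix (Fin m) (Fin n) ℝ => gRho ρ (Xᵀ * X - 1)) M H =
          finner (M * (V + Vᵀ)) H := by
  obtain ⟨V, hV, hmaxV⟩ := S19.exists_max ρ (Mᵀ * M - 1)
  let L : Matrix (Fin m) (Fin n) ℝ →ₗ[ℝ] ℝ :=
    { toFun := fun H => finner (M * (V + Vᵀ)) H
      map_add' := fun H₁ H₂ => S19.finner_add_right _ _ _
      map_smul' := fun t H => by simp [S19.finner_smul_right] }
  have hFD : HasFDerivAt (fun X : Matrix (Fin m) (Fin n) ℝ => gRho ρ (Xᵀ * X - 1))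
      (LinearMap.toContinuousLinearMap L) M := by
    refine hasFDerivAt_iff_isLittleO_nhds_zero.mpr ?_
    rw [Asymptotics.isLittleO_iff]
    intro c hc
    obtain ⟨C, hC⟩ : ∃ C : ℝ,
        C = 1 / ρ * ((n : ℝ) * (m : ℝ) * (2 * ‖M‖ + 1)) ^ 2 + (m : ℝ) := ⟨_, rfl⟩
    have hC0 : 0 ≤ C := by
      rw [hC]
      exact add_nonneg (mul_nonneg (one_div_pos.mpr hρ).le (sq_nonneg _)) (Nat.cast_nonneg m)
    rw [Metric.eventually_nhds_iff]
    refine ⟨min 1 (c / (C + 1)), lt_min one_pos (div_pos hc (by linarith)), fun H hH => ?_⟩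
    rw [dist_zero_right] at hH
    have hH1 : ‖H‖ ≤ 1 := le_of_lt (lt_of_lt_of_le hH (min_le_left _ _))
    have hH2 : ‖H‖ ≤ c / (C + 1) := le_of_lt (lt_of_lt_of_le hH (min_le_right _ _))
    have hest := S19.main_est hρ M hV hmaxV H hH1
    rw [← hC] at hest
    have happ : (LinearMap.toContinuousLinearMap L) H = finner (M * (V + Vᵀ)) H := rfl
    have hnorm : ‖gRho ρ ((M + H)ᵀ * (M + H) - 1) - gRho ρ (Mᵀ * M - 1)
        - (LinearMap.toContinuousLinearMap L) H‖
        = |gRho ρ ((M + H)ᵀ * (M + H) - 1) - gRho ρ (Mᵀ * M - 1)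
        - finner (M * (V + Vᵀ)) H| := by rw [happ, Real.norm_eq_abs]
    calc ‖gRho ρ ((M + H)ᵀ * (M + H) - 1) - gRho ρ (Mᵀ * M - 1)
          - (LinearMap.toContinuousLinearMap L) H‖
        = |gRho ρ ((M + H)ᵀ * (M + H) - 1) - gRho ρ (Mᵀ * M - 1)
          - finner (M * (V + Vᵀ)) H| := hnorm
      _ ≤ C * ‖H‖ ^ 2 := hest
      _ ≤ c * ‖H‖ := by
          have h1 : C * ‖H‖ ^ 2 ≤ C * ((c / (C + 1)) * ‖H‖) := by
            have : ‖H‖ ^ 2 ≤ (c / (C + 1)) * ‖H‖ := by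
              have := mul_le_mul_of_nonneg_right hH2 (norm_nonneg H)
              nlinarith [norm_nonneg H]
            exact mul_le_mul_of_nonneg_left this hC0
          have h2 : C * ((c / (C + 1)) * ‖H‖) ≤ c * ‖H‖ := by
            rw [← mul_assoc]
            apply mul_le_mul_of_nonneg_right _ (norm_nonneg H)
            have e : C * (c / (C + 1)) = c * (C / (C + 1)) := by ring
            rw [e]
            have hd : C / (C + 1) ≤ 1 := by
              rw [div_le_one (by linarith)]; linarith
            nlinarith [hc.le]
          linarith
  refine ⟨V, ⟨hV, hmaxV⟩,
    fun W hW hmaxW => S19.max_unique hρ hV hmaxV hW hmaxW,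
    hFD.differentiableAt, fun H => ?_⟩
  rw [hFD.fderiv]
  rfl
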